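/- For i = 1,2, let (M_i,d_i) be a metric space and k_i a kernel on M_i. Let f : M_1 × M_2 → ℝ be measurable and fix (x,y) ∈ M_1 × M_2. If the integrals L_1(f^y)(x) = ∫_{M_1∖{x}} (f(u,y) − f(x,y)) k_1(x,du) and L_2(f_x)(y) = ∫_{M_2∖{y}} (f(x,v) − f(x,y)) k_2(y,dv) both exist (their positive and negative parts have finite integral), then ∫_{(M_1×M_2)∖{(x,y)}} (f(u,v) − f(x,y)) (k_1⊕k_2)((x,y), d(u,v)) = L_1(f^y)(x) + L_2(f_x)(y). -/
import Mathlib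


open MeasureTheory ENNReal

/-- `Upsilon r = exp r - 1 - r`. -/
noncomputable def Upsilon (r : ℝ) : ℝ := Real.exp r - 1 - r

/-- The operator `Ψ_Υ^k(f)(x) = ∫_{M∖{x}} Υ(f(y) − f(x)) k(x,dy)` with values in `[0,∞]`. -/
noncomputable def PsiUpsilon {M : Type*} [MeasurableSpace M]
    (k : M → Measure M) (f : M → ℝ) (x : M) : ℝ≥0∞ :=
  ∫⁻ y in {x}ᶜ, ENNReal.ofReal (Upsilon (f y - f x)) ∂(k x)

/-- The nonlocal Fisher information `i_k(f) = ∫_M f(x) Ψ_Υ^k(log f)(x) dμ(x)`. -/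
noncomputable def nlFisher {M : Type*} [MeasurableSpace M]
    (μ : Measure M) (k : M → Measure M) (f : M → ℝ) : ℝ≥0∞ :=
  ∫⁻ x, ENNReal.ofReal (f x) * PsiUpsilon k (fun y => Real.log (f y)) x ∂μ

/-- Tensorization of kernels: `(k₁⊕k₂)((x,y),A) = k₁(x, A^y) + k₂(y, A_x)`, realized via
pushforward measures (on measurable `A` these agree with the section formula). -/
noncomputable def tensorKernel {M₁ M₂ : Type*} [MeasurableSpace M₁] [MeasurableSpace M₂]
    (k₁ : M₁ → Measure M₁) (k₂ : M₂ → Measure M₂) : M₁ × M₂ → Measure (M₁ × M₂) :=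
  fun p => (k₁ p.1).map (fun u => (u, p.2)) + (k₂ p.2).map (fun v => (p.1, v))

/-- If `L₁(f^y)(x)` and `L₂(f_x)(y)` exist (i.e. the corresponding
integrands are integrable), then the nonlocal operator associated with the tensorized
kernel `k₁⊕k₂` evaluates as the sum
`∫_{(M₁×M₂)∖{(x,y)}} (f(u,v) − f(x,y)) (k₁⊕k₂)((x,y),d(u,v)) = L₁(f^y)(x) + L₂(f_x)(y)`. -/
theorem tensorKernel_integral_sum
    {M₁ M₂ : Type*} [MetricSpace M₁] [MetricSpace M₂]
    [MeasurableSpace M₁] [MeasurableSpace M₂] [BorelSpace M₁] [BorelSpace M₂]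
    (k₁ : ProbabilityTheory.Kernel M₁ M₁) (k₂ : ProbabilityTheory.Kernel M₂ M₂)
    (hk₁ : ∀ x, SigmaFinite (k₁ x)) (hk₂ : ∀ y, SigmaFinite (k₂ y))
    (f : M₁ × M₂ → ℝ) (hf : Measurable f) (x : M₁) (y : M₂)
    (h₁ : IntegrableOn (fun u => f (u, y) - f (x, y)) {x}ᶜ (k₁ x))
    (h₂ : IntegrableOn (fun v => f (x, v) - f (x, y)) {y}ᶜ (k₂ y)) :
    ∫ p in {(x, y)}ᶜ, (f p - f (x, y))
        ∂(tensorKernel (fun a => k₁ a) (fun b => k₂ b) (x, y))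
      = (∫ u in {x}ᶜ, (f (u, y) - f (x, y)) ∂(k₁ x))
        + ∫ v in {y}ᶜ, (f (x, v) - f (x, y)) ∂(k₂ y) := by
  have e₁ : MeasurableEmbedding (fun u : M₁ => (u, y)) := measurableEmbedding_prod_mk_right y
  have e₂ : MeasurableEmbedding (fun v : M₂ => (x, v)) := measurableEmbedding_prodMk_left x
  have hs : MeasurableSet ({(x,y)}ᶜ : Set (M₁ × M₂)) := (measurableSet_singleton _).compl
  have hp₁ : (fun u : M₁ => (u, y)) ⁻¹' {(x,y)}ᶜ = {x}ᶜ := by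
    ext u; simp [Prod.ext_iff]
  have hp₂ : (fun v : M₂ => (x, v)) ⁻¹' {(x,y)}ᶜ = {y}ᶜ := by
    ext v; simp [Prod.ext_iff]
  have hr₁ : ((k₁ x).map (fun u => (u, y))).restrict {(x,y)}ᶜ
      = ((k₁ x).restrict {x}ᶜ).map (fun u => (u, y)) := by
    rw [Measure.restrict_map e₁.measurable hs, hp₁]
  have hr₂ : ((k₂ y).map (fun v => (x, v))).restrict {(x,y)}ᶜ
      = ((k₂ y).restrict {y}ᶜ).map (fun v => (x, v)) := by
    rw [Measure.restrict_map e₂.measurable hs, hp₂]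
  show ∫ p in {(x, y)}ᶜ, (f p - f (x, y))
        ∂(((k₁ x).map (fun u => (u, y)) + (k₂ y).map (fun v => (x, v)))) = _
  rw [Measure.restrict_add, integral_add_measure, hr₁, hr₂,
    e₁.integral_map, e₂.integral_map]
  · rw [hr₁]; exact (e₁.integrable_map_iff).2 h₁
  · rw [hr₂]; exact (e₂.integrable_map_iff).2 h₂
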